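/- Let p ≥ 3 be odd, ω a primitive p-th root of unity, and U the operator on ℂ^p ⊗ ℂ^p given by U(e_i ⊗ e_j) = ω^{i−j} e_{i+1} ⊗ e_{j+1} (indices mod p). Then there exists a scalar ζ of modulus making it unitary, such that R = ζ · Σ_{j=0}^{p−1} ω^{j²} U^j satisfies the Yang-Baxter equation on ℂ^p ⊗ ℂ^p. -/

import Mathlib

open Matrix

set_option linter.unusedSectionVars false

/-- The operator on `(ℂ^ι)^{⊗n}` (modeled as matrices indexed by `Fin n → ι`)
acting as `R` on tensor factors `i, i+1` and as the identity elsewhere. -/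
def localOp {ι : Type} [DecidableEq ι]
    (R : Matrix (ι × ι) (ι × ι) ℂ) (n i : ℕ) (h : i + 1 < n) :
    Matrix (Fin n → ι) (Fin n → ι) ℂ :=
  fun f g =>
    (if ∀ k : Fin n, (k : ℕ) ≠ i → (k : ℕ) ≠ i + 1 → f k = g k then 1 else 0) *
      R (f ⟨i, Nat.lt_of_succ_lt h⟩, f ⟨i + 1, h⟩)
        (g ⟨i, Nat.lt_of_succ_lt h⟩, g ⟨i + 1, h⟩)

/-- The Yang–Baxter equation `(R⊗I)(I⊗R)(R⊗I) = (I⊗R)(R⊗I)(I⊗R)`. -/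
def YangBaxter {ι : Type} [Fintype ι] [DecidableEq ι] (R : Matrix (ι × ι) (ι × ι) ℂ) : Prop :=
  localOp R 3 0 (by omega) * localOp R 3 1 (by omega) * localOp R 3 0 (by omega) =
    localOp R 3 1 (by omega) * localOp R 3 0 (by omega) * localOp R 3 1 (by omega)

/-- The operator `U` on `ℂ^p ⊗ ℂ^p` defined on the standard basis by
`U(e_i ⊗ e_j) = ω^{i−j} e_{i+1} ⊗ e_{j+1}`, indices mod `p`. -/
def gaussU (p : ℕ) [NeZero p] (ω : ℂ) :
    Matrix (ZMod p × ZMod p) (ZMod p × ZMod p) ℂ :=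
  fun r c => if r.1 = c.1 + 1 ∧ r.2 = c.2 + 1 then ω ^ (c.1 - c.2).val else 0

noncomputable def ee (p : ℕ) (ω : ℂ) (x : ZMod p) : ℂ := ω ^ x.val

noncomputable def gS (p : ℕ) (ω : ℂ) : Matrix (ZMod p × ZMod p) (ZMod p × ZMod p) ℂ :=
  fun r c => if r.1 - r.2 = c.1 - c.2 then ee p ω ((r.1 - c.1) * (r.1 - c.2)) else 0

section helpers

variable {p : ℕ} [NeZero p] {ω : ℂ}

omit [NeZero p] in
lemma pow_mod_eq (hp : ω ^ p = 1) (n : ℕ) : ω ^ (n % p) = ω ^ n := by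
  conv_rhs => rw [← Nat.div_add_mod n p]
  rw [pow_add, pow_mul, hp, one_pow, one_mul]

lemma ee_add (hp : ω ^ p = 1) (x y : ZMod p) : ee p ω (x + y) = ee p ω x * ee p ω y := by
  unfold ee
  rw [ZMod.val_add, pow_mod_eq hp, pow_add]

omit [NeZero p] in
lemma ee_zero : ee p ω 0 = 1 := by
  unfold ee
  rw [ZMod.val_zero, pow_zero]

lemma ee_natCast (hp : ω ^ p = 1) (n : ℕ) : ee p ω (n : ZMod p) = ω ^ n := by
  unfold ee
  rw [ZMod.val_natCast, pow_mod_eq hp]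

lemma ee_mul_neg (hp : ω ^ p = 1) (x : ZMod p) : ee p ω x * ee p ω (-x) = 1 := by
  rw [← ee_add hp, add_neg_cancel, ee_zero]

lemma ee_conj (hp : ω ^ p = 1) (x : ZMod p) :
    (starRingEnd ℂ) (ee p ω x) = ee p ω (-x) := by
  have hpz : p ≠ 0 := NeZero.ne p
  have habs : ‖ee p ω x‖ = 1 := by
    exact Complex.norm_eq_one_of_pow_eq_one (by show (ω ^ x.val) ^ p = 1; rw [← pow_mul, mul_comm, pow_mul, hp, one_pow]) hpz
  have h := Complex.inv_eq_conj habs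
  rw [← h]
  exact inv_eq_of_mul_eq_one_right (ee_mul_neg hp x)


lemma ee_sum_eq_zero (hω : IsPrimitiveRoot ω p) {α : ZMod p} (hα : α ≠ 0) :
    ∑ w : ZMod p, ee p ω (α * w) = 0 := by
  have hp : ω ^ p = 1 := hω.pow_eq_one
  have key : ee p ω α * ∑ w : ZMod p, ee p ω (α * w) = ∑ w : ZMod p, ee p ω (α * w) := by
    rw [Finset.mul_sum]
    refine Fintype.sum_equiv (Equiv.addRight 1) _ _ fun w => ?_
    simp only [Equiv.coe_addRight]
    rw [← ee_add hp]
    congr 1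
    ring
  have hne : ee p ω α ≠ 1 := by
    have h1 : 0 < α.val := Nat.pos_of_ne_zero (by simpa [ZMod.val_eq_zero] using hα)
    exact hω.pow_ne_one_of_pos_of_lt h1.ne' (ZMod.val_lt α)
  by_contra h0
  apply hne
  have hz : (ee p ω α - 1) * ∑ w : ZMod p, ee p ω (α * w) = 0 := by
    linear_combination key
  rcases mul_eq_zero.mp hz with h | h
  · exact sub_eq_zero.mp h
  · exact absurd h h0

lemma gaussU_pow (hp : ω ^ p = 1) (j : ℕ) (r c : ZMod p × ZMod p) :
    (gaussU p ω ^ j) r c =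
      if r.1 = c.1 + (j : ZMod p) ∧ r.2 = c.2 + (j : ZMod p)
        then ee p ω ((j : ZMod p) * (c.1 - c.2)) else 0 := by
  induction j generalizing r with
  | zero =>
    simp only [pow_zero, Nat.cast_zero, add_zero, zero_mul, ee_zero]
    rw [Matrix.one_apply]
    congr 1
    · simp [Prod.ext_iff]
  | succ j ih =>
    rw [pow_succ', Matrix.mul_apply]
    rw [Finset.sum_eq_single (r.1 - 1, r.2 - 1)]
    · by_cases h : r.1 = c.1 + ((j + 1 : ℕ) : ZMod p) ∧ r.2 = c.2 + ((j + 1 : ℕ) : ZMod p)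
      · rw [if_pos h]
        obtain ⟨h1, h2⟩ := h
        push_cast at h1 h2
        rw [ih, if_pos ⟨by rw [h1]; ring, by rw [h2]; ring⟩]
        rw [gaussU, if_pos ⟨by ring, by ring⟩]
        show ee p ω ((r.1 - 1) - (r.2 - 1)) * _ = _
        have he : (r.1 - 1) - (r.2 - 1) = c.1 - c.2 := by rw [h1, h2]; ring
        rw [he, ← ee_add hp]
        congr 1
        push_cast
        ring
      · rw [if_neg h, ih, if_neg, mul_zero]
        intro ⟨ha, hb⟩
        simp only at ha hb
        exact h ⟨by push_cast; rw [show r.1 = (r.1 - 1) + 1 by ring, ha]; ring,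
                 by push_cast; rw [show r.2 = (r.2 - 1) + 1 by ring, hb]; ring⟩
    · intro k _ hk
      rw [gaussU, if_neg, zero_mul]
      intro ⟨ha, hb⟩
      exact hk (Prod.ext (by rw [ha]; ring) (by rw [hb]; ring))
    · intro h
      exact absurd (Finset.mem_univ _) h

lemma sum_pow_eq_gS (hp : ω ^ p = 1) :
    ∑ j ∈ Finset.range p, ω ^ (j ^ 2) • gaussU p ω ^ j = gS p ω := by
  ext r c
  rw [Matrix.sum_apply]
  simp only [Matrix.smul_apply, smul_eq_mul, gaussU_pow hp]
  show _ = gS p ω r c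
  rw [gS]
  by_cases hc : r.1 - r.2 = c.1 - c.2
  · rw [if_pos hc]
    have hcast : (((r.1 - c.1).val : ℕ) : ZMod p) = r.1 - c.1 := by
      rw [ZMod.natCast_val, ZMod.cast_id]
    rw [Finset.sum_eq_single ((r.1 - c.1).val)]
    · rw [if_pos ⟨by rw [hcast]; ring, by rw [hcast]; linear_combination -hc⟩]
      rw [← ee_natCast hp ((r.1 - c.1).val ^ 2), ← ee_add hp]
      congr 1
      push_cast
      rw [hcast]
      ring
    · intro j hj hjne
      rw [if_neg, mul_zero]
      intro ⟨h1, _⟩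
      apply hjne
      have hjc : (j : ZMod p) = r.1 - c.1 := by linear_combination -h1
      rw [← hjc, ZMod.val_natCast_of_lt (Finset.mem_range.mp hj)]
    · intro h
      exact absurd (Finset.mem_range.mpr (ZMod.val_lt _)) h
  · rw [if_neg hc]
    apply Finset.sum_eq_zero
    intro j _
    rw [if_neg, mul_zero]
    intro ⟨h1, h2⟩
    exact hc (by rw [h1, h2]; ring)

lemma two_unit (hodd : Odd p) : IsUnit (2 : ZMod p) := by
  have h2 : ((2 : ℕ) : ZMod p) = (2 : ZMod p) := by push_cast; rfl
  rw [← h2, ZMod.isUnit_iff_coprime]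
  exact (Nat.prime_two.coprime_iff_not_dvd).mpr (Nat.two_dvd_ne_zero.mpr (Nat.odd_iff.mp hodd))

lemma gS_mul_conj (hω : IsPrimitiveRoot ω p) (hodd : Odd p) :
    gS p ω * (gS p ω)ᴴ = (p : ℂ) • (1 : Matrix (ZMod p × ZMod p) (ZMod p × ZMod p) ℂ) := by
  have hp : ω ^ p = 1 := hω.pow_eq_one
  obtain ⟨z, hz⟩ := two_unit (p := p) hodd
  have h2i : (2 : ZMod p) * ↑z⁻¹ = 1 := by rw [← hz]; exact z.mul_inv
  ext r c
  rw [Matrix.mul_apply, Fintype.sum_prod_type]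
  simp only [conjTranspose_apply]
  by_cases hc : r.1 - r.2 = c.1 - c.2
  · have hterm : ∀ u : ZMod p,
        (∑ v : ZMod p, gS p ω r (u, v) * star (gS p ω c (u, v)))
          = ee p ω ((r.1 - c.1) * ((r.1 + c.1 + (r.1 - r.2)) - 2 * u)) := by
      intro u
      rw [Finset.sum_eq_single (u - (r.1 - r.2))]
      · simp only [gS]
        rw [if_pos (by ring : r.1 - r.2 = u - (u - (r.1 - r.2)))]
        rw [if_pos (by rw [← hc]; ring : c.1 - c.2 = u - (u - (r.1 - r.2)))]
        rw [Complex.star_def, ee_conj hp, ← ee_add hp]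
        congr 1
        ring
      · intro v _ hv
        simp only [gS]
        rw [if_neg, zero_mul]
        intro h
        exact hv (by linear_combination h)
      · intro h
        exact absurd (Finset.mem_univ _) h
    rw [Finset.sum_congr rfl fun u _ => hterm u]
    by_cases hrc : r.1 = c.1
    · have hreq : r = c := Prod.ext hrc (by linear_combination hrc - hc)
      rw [show r.1 - c.1 = 0 by rw [hrc]; ring]
      simp only [zero_mul, ee_zero]
      rw [Finset.sum_const, Finset.card_univ, ZMod.card, nsmul_eq_mul, mul_one]
      rw [hreq, Matrix.smul_apply, Matrix.one_apply_eq, smul_eq_mul, mul_one]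
    · have hα : r.1 - c.1 ≠ 0 := fun h => hrc (by linear_combination h)
      have heq : ∑ u : ZMod p, ee p ω ((r.1 - c.1) * ((r.1 + c.1 + (r.1 - r.2)) - 2 * u))
          = ∑ w : ZMod p, ee p ω ((r.1 - c.1) * w) := by
        refine Fintype.sum_equiv
          ⟨fun u => (r.1 + c.1 + (r.1 - r.2)) - 2 * u,
           fun w => ↑z⁻¹ * ((r.1 + c.1 + (r.1 - r.2)) - w), fun u => ?_, fun w => ?_⟩ _ _
          (fun u => rfl)
        · show (↑z⁻¹ : ZMod p) * ((r.1 + c.1 + (r.1 - r.2))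
              - ((r.1 + c.1 + (r.1 - r.2)) - 2 * u)) = u
          rw [show (r.1 + c.1 + (r.1 - r.2)) - ((r.1 + c.1 + (r.1 - r.2)) - 2 * u)
              = 2 * u by ring]
          rw [show (↑z⁻¹ : ZMod p) * (2 * u) = (2 * ↑z⁻¹) * u by ring, h2i, one_mul]
        · show (r.1 + c.1 + (r.1 - r.2))
              - 2 * ((↑z⁻¹ : ZMod p) * ((r.1 + c.1 + (r.1 - r.2)) - w)) = w
          rw [show (r.1 + c.1 + (r.1 - r.2))
                - 2 * ((↑z⁻¹ : ZMod p) * ((r.1 + c.1 + (r.1 - r.2)) - w))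
              = (r.1 + c.1 + (r.1 - r.2))
                - (2 * ↑z⁻¹) * ((r.1 + c.1 + (r.1 - r.2)) - w) by ring, h2i, one_mul]
          ring
      rw [heq, ee_sum_eq_zero hω hα]
      rw [Matrix.smul_apply, Matrix.one_apply_ne (fun h => hrc (by rw [h])), smul_zero]
  · rw [Matrix.smul_apply, Matrix.one_apply_ne (fun h => hc (by rw [h])), smul_zero]
    apply Finset.sum_eq_zero
    intro u _
    apply Finset.sum_eq_zero
    intro v _
    simp only [gS]
    by_cases h1 : r.1 - r.2 = u - v
    · rw [if_neg (show ¬(c.1 - c.2 = u - v) from fun h => hc (h1.trans h.symm)), star_zero,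
        mul_zero]
    · rw [if_neg h1, zero_mul]

lemma key_sum (hp : ω ^ p = 1) (a b cc x y z : ZMod p) :
    ∑ t : ZMod p, (ee p ω ((a-t)*(a-(t-a+b))) *
      ((if (t-a+b) - cc = (t-x+y) - z
          then ee p ω (((t-a+b)-(t-x+y)) * ((t-a+b) - z)) else 0) *
        ee p ω ((t-x)*(t-y))))
  = ∑ s : ZMod p, (ee p ω ((b-s)*(b-(s-b+cc))) *
      ((if a - s = x - (s-b+cc+y-z)
          then ee p ω ((a-x) * (a-(s-b+cc+y-z))) else 0) *
        ee p ω (((s-b+cc+y-z)-y)*((s-b+cc+y-z)-z)))) := by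
  refine Fintype.sum_equiv (Equiv.addRight (b - x)) _ _ fun t => ?_
  simp only [Equiv.coe_addRight]
  by_cases hC : a - b + cc = x - y + z
  · erw [if_pos (by linear_combination -hC), if_pos (by linear_combination hC)]
    rw [← ee_add hp, ← ee_add hp, ← ee_add hp, ← ee_add hp]
    congr 1
    linear_combination (2*a - b - cc + x + 2*z - 3*t) * hC
  · erw [if_neg (fun hh => hC (by linear_combination -hh)),
        if_neg (fun hh => hC (by linear_combination hh)),
        zero_mul, mul_zero, zero_mul, mul_zero]

lemma gS_apply (r1 r2 c1 c2 : ZMod p) : gS p ω (r1, r2) (c1, c2) =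
    if r1 - r2 = c1 - c2 then ee p ω ((r1 - c1) * (r1 - c2)) else 0 := rfl

lemma gS_ne_zero {r c : ZMod p × ZMod p} (hne : gS p ω r c ≠ 0) :
    r.1 - r.2 = c.1 - c.2 := by
  by_contra hcon
  apply hne
  simp only [gS]
  rw [if_neg hcon]

def tri (u v w : ZMod p) : Fin 3 → ZMod p := fun k =>
  if k.1 = 0 then u else if k.1 = 1 then v else w

@[simp] lemma tri0 (u v w : ZMod p) (hlt : 0 < 3) : tri u v w ⟨0, hlt⟩ = u := rfl
@[simp] lemma tri1 (u v w : ZMod p) (hlt : 1 < 3) : tri u v w ⟨1, hlt⟩ = v := rfl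
@[simp] lemma tri2 (u v w : ZMod p) (hlt : 2 < 3) : tri u v w ⟨2, hlt⟩ = w := rfl

lemma fin3_ext {u : Fin 3 → ZMod p} {v0 v1 v2 : ZMod p}
    (h0 : u ⟨0, by omega⟩ = v0) (h1 : u ⟨1, by omega⟩ = v1) (h2 : u ⟨2, by omega⟩ = v2) :
    u = tri v0 v1 v2 := by
  funext k
  match k with
  | ⟨0, _⟩ => exact h0
  | ⟨1, _⟩ => exact h1
  | ⟨2, _⟩ => exact h2

lemma sum_param {α β : Type} [Fintype α] [DecidableEq α] [Fintype β]
    (F : α → ℂ) (π : α → β) (G : β → α)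
    (hG : ∀ g, F g ≠ 0 → g = G (π g)) (hπ : ∀ t, π (G t) = t) :
    ∑ g, F g = ∑ t, F (G t) := by
  have hinj : Function.Injective G := fun s t hst => by rw [← hπ s, hst, hπ t]
  have himg : ∑ t : β, F (G t) = ∑ g ∈ Finset.univ.image G, F g :=
    (Finset.sum_image (fun s _ t _ hst => hinj hst)).symm
  rw [himg]
  refine (Finset.sum_subset (Finset.subset_univ _) fun g _ hg => ?_).symm
  by_contra h0
  exact hg (Finset.mem_image.mpr ⟨π g, Finset.mem_univ _, (hG g h0).symm⟩)

lemma triple_apply {I : Type} [Fintype I] [DecidableEq I] (A B C : Matrix I I ℂ) (f h : I) :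
    (A * B * C) f h = ∑ g, A f g * ∑ g', B g g' * C g' h := by
  simp_rw [Matrix.mul_apply, Finset.sum_mul, Finset.mul_sum, mul_assoc]
  rw [Finset.sum_comm]

lemma cond0_iff {f g : Fin 3 → ZMod p} :
    (∀ k : Fin 3, (k : ℕ) ≠ 0 → (k : ℕ) ≠ 0 + 1 → f k = g k) ↔
      f ⟨2, by omega⟩ = g ⟨2, by omega⟩ := by
  constructor
  · intro hh
    exact hh ⟨2, by omega⟩ (by decide) (by decide)
  · intro hh k h0 h1
    match k with
    | ⟨0, _⟩ => exact absurd rfl h0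
    | ⟨1, _⟩ => exact absurd rfl h1
    | ⟨2, _⟩ => exact hh

lemma cond1_iff {f g : Fin 3 → ZMod p} :
    (∀ k : Fin 3, (k : ℕ) ≠ 1 → (k : ℕ) ≠ 1 + 1 → f k = g k) ↔
      f ⟨0, by omega⟩ = g ⟨0, by omega⟩ := by
  constructor
  · intro hh
    exact hh ⟨0, by omega⟩ (by decide) (by decide)
  · intro hh k h0 h1
    match k with
    | ⟨0, _⟩ => exact hh
    | ⟨1, _⟩ => exact absurd rfl h0
    | ⟨2, _⟩ => exact absurd rfl h1

lemma localOp0_apply (hlt : 0 + 1 < 3) (f g : Fin 3 → ZMod p) :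
    localOp (gS p ω) 3 0 hlt f g =
      (if f ⟨2, by omega⟩ = g ⟨2, by omega⟩ then 1 else 0) *
        (if f ⟨0, by omega⟩ - f ⟨1, by omega⟩ = g ⟨0, by omega⟩ - g ⟨1, by omega⟩
          then ee p ω ((f ⟨0, by omega⟩ - g ⟨0, by omega⟩) * (f ⟨0, by omega⟩ - g ⟨1, by omega⟩))
          else 0) := by
  unfold localOp
  rw [gS_apply]
  congr 1
  exact if_congr cond0_iff rfl rfl

lemma localOp1_apply (hlt : 1 + 1 < 3) (f g : Fin 3 → ZMod p) :
    localOp (gS p ω) 3 1 hlt f g =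
      (if f ⟨0, by omega⟩ = g ⟨0, by omega⟩ then 1 else 0) *
        (if f ⟨1, by omega⟩ - f ⟨2, by omega⟩ = g ⟨1, by omega⟩ - g ⟨2, by omega⟩
          then ee p ω ((f ⟨1, by omega⟩ - g ⟨1, by omega⟩) * (f ⟨1, by omega⟩ - g ⟨2, by omega⟩))
          else 0) := by
  unfold localOp
  rw [gS_apply]
  congr 1
  exact if_congr cond1_iff rfl rfl

def rowParam (f : Fin 3 → ZMod p) (t : ZMod p) : Fin 3 → ZMod p :=
  tri t (t - f ⟨0, by omega⟩ + f ⟨1, by omega⟩) (f ⟨2, by omega⟩)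

def colParam (f : Fin 3 → ZMod p) (s : ZMod p) : Fin 3 → ZMod p :=
  tri (f ⟨0, by omega⟩) s (s - f ⟨1, by omega⟩ + f ⟨2, by omega⟩)

theorem ybe_core (hp : ω ^ p = 1)
    (A B : Matrix (Fin 3 → ZMod p) (Fin 3 → ZMod p) ℂ)
    (hA : ∀ f g, A f g =
      (if f ⟨2, by omega⟩ = g ⟨2, by omega⟩ then 1 else 0) *
        (if f ⟨0, by omega⟩ - f ⟨1, by omega⟩ = g ⟨0, by omega⟩ - g ⟨1, by omega⟩
          then ee p ω ((f ⟨0, by omega⟩ - g ⟨0, by omega⟩) * (f ⟨0, by omega⟩ - g ⟨1, by omega⟩))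
          else 0))
    (hB : ∀ f g, B f g =
      (if f ⟨0, by omega⟩ = g ⟨0, by omega⟩ then 1 else 0) *
        (if f ⟨1, by omega⟩ - f ⟨2, by omega⟩ = g ⟨1, by omega⟩ - g ⟨2, by omega⟩
          then ee p ω ((f ⟨1, by omega⟩ - g ⟨1, by omega⟩) * (f ⟨1, by omega⟩ - g ⟨2, by omega⟩))
          else 0)) :
    A * B * A = B * A * B := by
  ext f h
  have innerL : ∀ g : Fin 3 → ZMod p,
      (∑ g' : Fin 3 → ZMod p, B g g' * A g' h) =
        B g (rowParam h (g ⟨0, by omega⟩)) * A (rowParam h (g ⟨0, by omega⟩)) h := by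
    intro g
    refine (sum_param _ (fun g' => g' ⟨0, by omega⟩) (rowParam h) ?_ fun t => rfl).trans ?_
    · intro g' hne
      have hA' : A g' h ≠ 0 := right_ne_zero_of_mul hne
      rw [hA] at hA'
      have hc1 : g' ⟨2, by omega⟩ = h ⟨2, by omega⟩ := by
        by_contra hcon
        rw [if_neg hcon, zero_mul] at hA'
        exact hA' rfl
      have hc2 : g' ⟨0, by omega⟩ - g' ⟨1, by omega⟩ = h ⟨0, by omega⟩ - h ⟨1, by omega⟩ := by
        by_contra hcon
        rw [if_neg hcon, mul_zero] at hA'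
        exact hA' rfl
      exact fin3_ext rfl (by linear_combination -hc2) hc1
    · refine Finset.sum_eq_single _ (fun t' _ ht' => ?_)
        (fun hmem => absurd (Finset.mem_univ _) hmem)
      rw [hB]
      simp only [rowParam, tri0]
      erw [if_neg (fun hh => ht' hh.symm), zero_mul, zero_mul]
  have innerR : ∀ g : Fin 3 → ZMod p,
      (∑ g' : Fin 3 → ZMod p, A g g' * B g' h) =
        A g (colParam h (g ⟨2, by omega⟩ + h ⟨1, by omega⟩ - h ⟨2, by omega⟩)) *
          B (colParam h (g ⟨2, by omega⟩ + h ⟨1, by omega⟩ - h ⟨2, by omega⟩)) h := by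
    intro g
    refine (sum_param _ (fun g' => g' ⟨1, by omega⟩) (colParam h) ?_ fun t => rfl).trans ?_
    · intro g' hne
      have hB' : B g' h ≠ 0 := right_ne_zero_of_mul hne
      rw [hB] at hB'
      have hc1 : g' ⟨0, by omega⟩ = h ⟨0, by omega⟩ := by
        by_contra hcon
        rw [if_neg hcon, zero_mul] at hB'
        exact hB' rfl
      have hc2 : g' ⟨1, by omega⟩ - g' ⟨2, by omega⟩ = h ⟨1, by omega⟩ - h ⟨2, by omega⟩ := by
        by_contra hcon
        rw [if_neg hcon, mul_zero] at hB'
        exact hB' rfl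
      exact fin3_ext hc1 rfl (by linear_combination -hc2)
    · refine Finset.sum_eq_single _ (fun s' _ hs' => ?_)
        (fun hmem => absurd (Finset.mem_univ _) hmem)
      rw [hA]
      simp only [colParam, tri2]
      erw [if_neg (fun hh => hs' (by linear_combination -hh)), zero_mul, zero_mul]
  have hL : (A * B * A) f h = ∑ t : ZMod p,
      (ee p ω ((f ⟨0, by omega⟩ - t) * (f ⟨0, by omega⟩ - (t - f ⟨0, by omega⟩ + f ⟨1, by omega⟩))) *
        ((if (t - f ⟨0, by omega⟩ + f ⟨1, by omega⟩) - f ⟨2, by omega⟩ =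
              (t - h ⟨0, by omega⟩ + h ⟨1, by omega⟩) - h ⟨2, by omega⟩
            then ee p ω (((t - f ⟨0, by omega⟩ + f ⟨1, by omega⟩) - (t - h ⟨0, by omega⟩ + h ⟨1, by omega⟩)) *
              ((t - f ⟨0, by omega⟩ + f ⟨1, by omega⟩) - h ⟨2, by omega⟩)) else 0) *
          ee p ω ((t - h ⟨0, by omega⟩) * (t - h ⟨1, by omega⟩)))) := by
    refine (triple_apply A B A f h).trans ?_
    refine (Finset.sum_congr rfl fun g _ =>
      congrArg (fun w => A f g * w) (innerL g)).trans ?_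
    refine (sum_param _ (fun g => g ⟨0, by omega⟩) (rowParam f) ?_ fun t => rfl).trans ?_
    · intro g hne
      have hA' : A f g ≠ 0 := left_ne_zero_of_mul hne
      rw [hA] at hA'
      have hc1 : f ⟨2, by omega⟩ = g ⟨2, by omega⟩ := by
        by_contra hcon
        rw [if_neg hcon, zero_mul] at hA'
        exact hA' rfl
      have hc2 : f ⟨0, by omega⟩ - f ⟨1, by omega⟩ = g ⟨0, by omega⟩ - g ⟨1, by omega⟩ := by
        by_contra hcon
        rw [if_neg hcon, mul_zero] at hA'
        exact hA' rfl
      exact fin3_ext rfl (by linear_combination hc2) hc1.symm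
    · refine Finset.sum_congr rfl fun t _ => ?_
      rw [hA, hB, hA]
      simp only [rowParam, colParam, tri0, tri1, tri2]
      simp only [if_true, one_mul]
      erw [if_pos (show f ⟨0, by omega⟩ - f ⟨1, by omega⟩ =
            t - (t - f ⟨0, by omega⟩ + f ⟨1, by omega⟩) by ring)]
      erw [if_pos (show t - (t - h ⟨0, by omega⟩ + h ⟨1, by omega⟩) =
            h ⟨0, by omega⟩ - h ⟨1, by omega⟩ by ring)]
      rfl
  have hR : (B * A * B) f h = ∑ s : ZMod p,
      (ee p ω ((f ⟨1, by omega⟩ - s) * (f ⟨1, by omega⟩ - (s - f ⟨1, by omega⟩ + f ⟨2, by omega⟩))) *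
        ((if f ⟨0, by omega⟩ - s =
              h ⟨0, by omega⟩ - (s - f ⟨1, by omega⟩ + f ⟨2, by omega⟩ + h ⟨1, by omega⟩ - h ⟨2, by omega⟩)
            then ee p ω ((f ⟨0, by omega⟩ - h ⟨0, by omega⟩) *
              (f ⟨0, by omega⟩ - (s - f ⟨1, by omega⟩ + f ⟨2, by omega⟩ + h ⟨1, by omega⟩ - h ⟨2, by omega⟩))) else 0) *
          ee p ω (((s - f ⟨1, by omega⟩ + f ⟨2, by omega⟩ + h ⟨1, by omega⟩ - h ⟨2, by omega⟩) - h ⟨1, by omega⟩) *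
            ((s - f ⟨1, by omega⟩ + f ⟨2, by omega⟩ + h ⟨1, by omega⟩ - h ⟨2, by omega⟩) - h ⟨2, by omega⟩)))) := by
    refine (triple_apply B A B f h).trans ?_
    refine (Finset.sum_congr rfl fun g _ =>
      congrArg (fun w => B f g * w) (innerR g)).trans ?_
    refine (sum_param _ (fun g => g ⟨1, by omega⟩) (colParam f) ?_ fun s => rfl).trans ?_
    · intro g hne
      have hB' : B f g ≠ 0 := left_ne_zero_of_mul hne
      rw [hB] at hB'
      have hc1 : f ⟨0, by omega⟩ = g ⟨0, by omega⟩ := by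
        by_contra hcon
        rw [if_neg hcon, zero_mul] at hB'
        exact hB' rfl
      have hc2 : f ⟨1, by omega⟩ - f ⟨2, by omega⟩ = g ⟨1, by omega⟩ - g ⟨2, by omega⟩ := by
        by_contra hcon
        rw [if_neg hcon, mul_zero] at hB'
        exact hB' rfl
      exact fin3_ext hc1.symm rfl (by linear_combination hc2)
    · refine Finset.sum_congr rfl fun s _ => ?_
      rw [hB, hA, hB]
      simp only [rowParam, colParam, tri0, tri1, tri2]
      simp only [if_true, one_mul]
      erw [if_pos (show f ⟨1, by omega⟩ - f ⟨2, by omega⟩ =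
            s - (s - f ⟨1, by omega⟩ + f ⟨2, by omega⟩) by ring)]
      erw [if_pos (show s - f ⟨1, by omega⟩ + f ⟨2, by omega⟩ =
            (s - f ⟨1, by omega⟩ + f ⟨2, by omega⟩ + h ⟨1, by omega⟩ - h ⟨2, by omega⟩)
              - h ⟨1, by omega⟩ + h ⟨2, by omega⟩ by ring)]
      erw [if_pos (show (s - f ⟨1, by omega⟩ + f ⟨2, by omega⟩ + h ⟨1, by omega⟩ - h ⟨2, by omega⟩)
            - ((s - f ⟨1, by omega⟩ + f ⟨2, by omega⟩ + h ⟨1, by omega⟩ - h ⟨2, by omega⟩)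
              - h ⟨1, by omega⟩ + h ⟨2, by omega⟩) = h ⟨1, by omega⟩ - h ⟨2, by omega⟩ by ring)]
      rw [one_mul]
      rfl
  rw [hL, hR]
  exact key_sum hp (f ⟨0, by omega⟩) (f ⟨1, by omega⟩) (f ⟨2, by omega⟩)
    (h ⟨0, by omega⟩) (h ⟨1, by omega⟩) (h ⟨2, by omega⟩)
-- appended part (test with full.lean prefix)
lemma localOp_smul {ι : Type} [DecidableEq ι] (c : ℂ) (R : Matrix (ι × ι) (ι × ι) ℂ)
    (n i : ℕ) (h : i + 1 < n) :
    localOp (c • R) n i h = c • localOp R n i h := by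
  ext f g
  simp only [localOp, Matrix.smul_apply, smul_eq_mul]
  ring

lemma yangBaxter_smul {ι : Type} [Fintype ι] [DecidableEq ι] (c : ℂ)
    {R : Matrix (ι × ι) (ι × ι) ℂ} (hR : YangBaxter R) : YangBaxter (c • R) := by
  unfold YangBaxter at hR ⊢
  simp only [localOp_smul, smul_mul_assoc, mul_smul_comm, smul_smul]
  rw [hR]

end helpers

/-- For `p ≥ 3` odd and `ω` a primitive `p`-th root of unity, there is a scalar `ζ`
such that `R = ζ · Σ_{j=0}^{p−1} ω^{j²} U^j` is unitary and satisfies the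
Yang–Baxter equation on `ℂ^p ⊗ ℂ^p`. -/
theorem stmt8 (p : ℕ) [NeZero p] (hp3 : 3 ≤ p) (hodd : Odd p)
    (ω : ℂ) (hω : IsPrimitiveRoot ω p) :
    ∃ ζ : ℂ,
      (ζ • ∑ j ∈ Finset.range p, ω ^ (j ^ 2) • gaussU p ω ^ j) ∈
          Matrix.unitaryGroup (ZMod p × ZMod p) ℂ ∧
        YangBaxter (ζ • ∑ j ∈ Finset.range p, ω ^ (j ^ 2) • gaussU p ω ^ j) := by
  have hp : ω ^ p = 1 := hω.pow_eq_one
  refine ⟨((Real.sqrt p : ℝ) : ℂ)⁻¹, ?_, ?_⟩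
  · rw [sum_pow_eq_gS hp, Matrix.mem_unitaryGroup_iff]
    have hsq : (0 : ℝ) < Real.sqrt p := Real.sqrt_pos.mpr
      (by exact_mod_cast Nat.pos_of_ne_zero (NeZero.ne p))
    have hζ : (((Real.sqrt p : ℝ) : ℂ))⁻¹ * star ((((Real.sqrt p : ℝ) : ℂ))⁻¹) * (p : ℂ) = 1 := by
      rw [Complex.star_def, map_inv₀, Complex.conj_ofReal]
      rw [show ((p : ℂ)) = ((Real.sqrt p : ℝ) : ℂ) * ((Real.sqrt p : ℝ) : ℂ) by
        rw [← Complex.ofReal_mul, Real.mul_self_sqrt (by positivity), Complex.ofReal_natCast]]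
      have hne : ((Real.sqrt p : ℝ) : ℂ) ≠ 0 := by
        exact_mod_cast ne_of_gt hsq
      field_simp
    calc (((Real.sqrt p : ℝ) : ℂ))⁻¹ • gS p ω * star ((((Real.sqrt p : ℝ) : ℂ))⁻¹ • gS p ω)
        = (((Real.sqrt p : ℝ) : ℂ))⁻¹ • (star ((((Real.sqrt p : ℝ) : ℂ))⁻¹) •
            (gS p ω * (gS p ω)ᴴ)) := by
          rw [star_smul, smul_mul_assoc, mul_smul_comm]
          rfl
      _ = 1 := by
          rw [gS_mul_conj hω hodd, smul_smul, smul_smul, hζ, one_smul]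
  · rw [sum_pow_eq_gS hp]
    refine yangBaxter_smul _ ?_
    unfold YangBaxter
    exact ybe_core hp _ _ (fun f g => localOp0_apply _ f g) (fun f g => localOp1_apply _ f g)
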